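/- Let λ be a weakly decreasing tuple of nonnegative integers of length n > 2, λ'' = (λ_3,…,λ_n), α = λ + ρ_n, α'' = (α_3,…,α_n), and let u, v be nonnegative integers. Assume the inductive hypothesis: P_{λ''}(x;t) · ∏_{a=2}^{n−2}(x_1 − q x_a) = Σ_{μ ∈ GT_2(α'')} M(α'';μ) · x_1^{|α''|−|μ|} · ζ(P_{μ−ρ_{n−3}}(x;t)). Then Σ_{μ ∈ GT_2(α'')} M(α'';μ) · x_1^{|α''|−|μ|} · ζ(P_{(u,v)⌢(μ−ρ_{n−3})}(x;t)) = Σ_{i=2}^n Σ_{2≤j≤n, j≠i} x_i^u x_j^v · ∏_{2≤a≤n, a≠i}(x_i − t x_a)/(x_i − x_a) · ∏_{2≤a≤n, a≠i,j}(x_j − t x_a)/(x_j − x_a) · ζ_{i,j}(P_{λ''}(x;t)) · ∏_{2≤a≤n, a≠i,j}(x_1 − q x_a), where (u,v)⌢ν denotes the concatenation of (u,v) with the tuple ν. -/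

import Mathlib

open MvPolynomial Finset

noncomputable section

abbrev Rr : Type := MvPolynomial (Fin 2 ⊕ ℕ) ℚ

abbrev F : Type := FractionRing Rr

/-- The variable `q`. -/
def q : F := algebraMap Rr F (X (Sum.inl 0))

/-- The variable `t`. -/
def t : F := algebraMap Rr F (X (Sum.inl 1))

/-- `x k` is the variable `x_{k+1}` of the paper (0-indexed). -/
def x (k : ℕ) : F := algebraMap Rr F (X (Sum.inr k))

/-- Substitution endomorphism of `F` induced by an injective map of variables. -/
def subF (g : Fin 2 ⊕ ℕ → Fin 2 ⊕ ℕ) (hg : Function.Injective g) : F →+* F :=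
  IsFractionRing.lift (g := (algebraMap Rr F).comp (rename g).toRingHom)
    (by
      rw [RingHom.coe_comp]
      exact (IsFractionRing.injective Rr F).comp (rename_injective g hg))

def permNat (n : ℕ) (σ : Equiv.Perm (Fin n)) : ℕ → ℕ :=
  fun k => if h : k < n then (σ ⟨k, h⟩ : ℕ) else k

lemma permNat_inj (n : ℕ) (σ : Equiv.Perm (Fin n)) : Function.Injective (permNat n σ) := by
  intro a b hab
  unfold permNat at hab
  split_ifs at hab with h1 h2 h2
  · have := σ.injective (Fin.val_injective hab)
    exact congrArg Fin.val this
  · have := (σ ⟨a, h1⟩).isLt; omega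
  · have := (σ ⟨b, h2⟩).isLt; omega
  · exact hab

/-- The action of a permutation `σ ∈ S_n` on `F`, permuting `x_1, …, x_n`. -/
def pact (n : ℕ) (σ : Equiv.Perm (Fin n)) : F →+* F :=
  subF (Sum.map id (permNat n σ)) (Function.injective_id.sumMap (permNat_inj n σ))

def shiftNat (i : ℕ) : ℕ → ℕ := fun k => if k < i then k else k + 1

lemma shiftNat_inj (i : ℕ) : Function.Injective (shiftNat i) := by
  intro a b; unfold shiftNat; split_ifs <;> omega

/-- `zeta i` is the endomorphism `ζ_{i+1}` of the paper: it fixes `q`, `t` and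
`x k` for `k < i`, and sends `x k` to `x (k+1)` for `k ≥ i` (0-indexed). -/
def zeta (i : ℕ) : F →+* F :=
  subF (Sum.map id (shiftNat i)) (Function.injective_id.sumMap (shiftNat_inj i))

/-- `zetaP i j` is `ζ_{i+1,j+1}` of the paper. -/
def zetaP (i j : ℕ) : F →+* F := (zeta (max i j)).comp (zeta (min i j))

/-- The Hall–Littlewood polynomial `P_λ(x; t)` in `n` variables. -/
def HL (n : ℕ) (lam : Fin n → ℕ) : F :=
  ∑ σ : Equiv.Perm (Fin n), pact n σ
    ((∏ i : Fin n, x i.val ^ lam i) *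
      ∏ i : Fin n, ∏ j ∈ Finset.Ioi i, (x i.val - t * x j.val) / (x i.val - x j.val))

/-- `ρ_n`, 0-indexed: `rho n i = n - 1 - i`. -/
def rho (n : ℕ) : Fin n → ℕ := fun i => n - 1 - i.val

/-- The deformed Weyl denominator `Δ_n(c) = ∏_{i<j} (x_i - c x_j)`. -/
def DeltaQ (n : ℕ) (c : F) : F := ∏ i : Fin n, ∏ j ∈ Finset.Ioi i, (x i.val - c * x j.val)

/-- The Schur polynomial `s_λ(x) = Σ_σ σ(x^{λ+ρ}/Δ_n)`. -/
def Schur (n : ℕ) (lam : Fin n → ℕ) : F :=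
  ∑ σ : Equiv.Perm (Fin n), pact n σ
    ((∏ i : Fin n, x i.val ^ (lam i + rho n i)) / DeltaQ n 1)

/-- `GT2 n α` is the set of tuples `μ` of length `n` with `α_{i+1} ≤ μ_i ≤ α_i`. -/
def GT2 (n : ℕ) (α : Fin (n+1) → ℕ) : Finset (Fin n → ℕ) :=
  Fintype.piFinset (fun i => Finset.Icc (α i.succ) (α i.castSucc))

def GLw (y a : ℕ) : F := if y = a then -q else if y + 1 = a then t else 0

def GRw (y b : ℕ) : F := if y = b then 1 else if y = b + 1 then -q * t else 0

/-- `w(μ_j)` where `a1 = α_j`, `a2 = α_{j+1}`, `m = μ_j`. -/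
def wgt (a1 a2 m : ℕ) : F :=
  (if m = a1 ∨ m = a2 then 0 else (1 - q) * (1 - t)) + GLw m a1 + GRw m a2

/-- The tridiagonal determinant `M(α; μ)`. -/
def Mdet (n : ℕ) (α : Fin (n+1) → ℕ) (μ : Fin n → ℕ) : F :=
  Matrix.det (Matrix.of fun i j : Fin n =>
    if i = j then wgt (α i.castSucc) (α i.succ) (μ i)
    else if (i : ℕ) + 1 = (j : ℕ) then 1
    else if (j : ℕ) + 1 = (i : ℕ) then GRw (μ j) (α i.castSucc) * GLw (μ i) (α i.castSucc)
    else 0)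

def tot {n : ℕ} (f : Fin n → ℕ) : ℕ := ∑ i, f i


section Infra

lemma subF_algebraMap (g : Fin 2 ⊕ ℕ → Fin 2 ⊕ ℕ) (hg : Function.Injective g) (r : Rr) :
    subF g hg (algebraMap Rr F r) = algebraMap Rr F (rename g r) := by
  unfold subF
  rw [IsFractionRing.lift_algebraMap]
  rfl

lemma subF_X (g : Fin 2 ⊕ ℕ → Fin 2 ⊕ ℕ) (hg : Function.Injective g) (v : Fin 2 ⊕ ℕ) :
    subF g hg (algebraMap Rr F (X v)) = algebraMap Rr F (X (g v)) := by
  rw [subF_algebraMap, rename_X]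

lemma subF_x (f : ℕ → ℕ) (hf : Function.Injective (Sum.map (id : Fin 2 → Fin 2) f)) (k : ℕ) :
    subF (Sum.map id f) hf (x k) = x (f k) := subF_X _ _ _

lemma subF_q (f : ℕ → ℕ) (hf : Function.Injective (Sum.map (id : Fin 2 → Fin 2) f)) :
    subF (Sum.map id f) hf q = q := subF_X _ _ _

lemma subF_t (f : ℕ → ℕ) (hf : Function.Injective (Sum.map (id : Fin 2 → Fin 2) f)) :
    subF (Sum.map id f) hf t = t := subF_X _ _ _

lemma F_hom_ext {φ ψ : F →+* F}
    (h : ∀ r : Rr, φ (algebraMap Rr F r) = ψ (algebraMap Rr F r)) : φ = ψ :=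
  IsLocalization.ringHom_ext (nonZeroDivisors Rr) (RingHom.ext h)

lemma subF_comp (g h : Fin 2 ⊕ ℕ → Fin 2 ⊕ ℕ) (hg : Function.Injective g)
    (hh : Function.Injective h) :
    (subF g hg).comp (subF h hh) = subF (g ∘ h) (hg.comp hh) := by
  apply F_hom_ext
  intro r
  simp only [RingHom.coe_comp, Function.comp_apply, subF_algebraMap, rename_rename]

lemma pact_x (n : ℕ) (σ : Equiv.Perm (Fin n)) (k : Fin n) :
    pact n σ (x k) = x (σ k) := by
  rw [pact, subF_x, permNat, dif_pos k.isLt]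

lemma pact_t (n : ℕ) (σ : Equiv.Perm (Fin n)) : pact n σ t = t := subF_t _ _

lemma pact_q (n : ℕ) (σ : Equiv.Perm (Fin n)) : pact n σ q = q := subF_q _ _

lemma zeta_x (i k : ℕ) : zeta i (x k) = x (shiftNat i k) := subF_x _ _ _

lemma zeta_t (i : ℕ) : zeta i t = t := subF_t _ _

lemma zeta_q (i : ℕ) : zeta i q = q := subF_q _ _

end Infra

section Branch

/-- The generic HL summand. -/
def HLterm (n : ℕ) (lam : Fin n → ℕ) : F :=
  (∏ i : Fin n, x i.val ^ lam i) *
    ∏ i : Fin n, ∏ j ∈ Finset.Ioi i, (x i.val - t * x j.val) / (x i.val - x j.val)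

lemma HL_eq (n : ℕ) (lam : Fin n → ℕ) :
    HL n lam = ∑ σ : Equiv.Perm (Fin n), pact n σ (HLterm n lam) := rfl

lemma pact_HLterm (n : ℕ) (σ : Equiv.Perm (Fin n)) (lam : Fin n → ℕ) :
    pact n σ (HLterm n lam) =
      (∏ i : Fin n, x (σ i).val ^ lam i) *
        ∏ i : Fin n, ∏ j ∈ Finset.Ioi i,
          (x (σ i).val - t * x (σ j).val) / (x (σ i).val - x (σ j).val) := by
  simp only [HLterm, map_mul, map_prod, map_pow, map_div₀, map_sub, pact_x, pact_t]

def embPerm (n : ℕ) (p : Fin (n + 1)) (τ : Equiv.Perm (Fin n)) : Equiv.Perm (Fin (n + 1)) :=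
  Equiv.ofBijective (Fin.cons p (fun i => p.succAbove (τ i)))
    (Finite.injective_iff_bijective.1 (by
      intro a b hab
      induction a using Fin.cases with
      | zero =>
        induction b using Fin.cases with
        | zero => rfl
        | succ j =>
          simp only [Fin.cons_zero, Fin.cons_succ] at hab
          exact absurd hab.symm (Fin.succAbove_ne p (τ j))
      | succ i =>
        induction b using Fin.cases with
        | zero =>
          simp only [Fin.cons_zero, Fin.cons_succ] at hab
          exact absurd hab (Fin.succAbove_ne p (τ i))
        | succ j =>
          simp only [Fin.cons_succ] at hab
          exact congrArg Fin.succ (τ.injective (Fin.succAbove_right_injective hab))))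

@[simp] lemma embPerm_zero (n : ℕ) (p : Fin (n + 1)) (τ : Equiv.Perm (Fin n)) :
    embPerm n p τ 0 = p := rfl

@[simp] lemma embPerm_succ (n : ℕ) (p : Fin (n + 1)) (τ : Equiv.Perm (Fin n)) (i : Fin n) :
    embPerm n p τ i.succ = p.succAbove (τ i) := rfl

def pairEquiv (n : ℕ) : Fin (n + 1) × Equiv.Perm (Fin n) ≃ Equiv.Perm (Fin (n + 1)) :=
  Equiv.ofBijective (fun pt => embPerm n pt.1 pt.2)
    ((Fintype.bijective_iff_injective_and_card _).2 ⟨by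
      rintro ⟨p, τ⟩ ⟨p', τ'⟩ h
      have h0 : p = p' := by
        have := congrArg (fun e : Equiv.Perm (Fin (n+1)) => e 0) h
        simpa using this
      subst h0
      have hτ : τ = τ' := by
        ext i
        have := congrArg (fun e : Equiv.Perm (Fin (n+1)) => e i.succ) h
        simp only [embPerm_succ] at this
        exact congrArg Fin.val (Fin.succAbove_right_injective this)
      rw [hτ], by
      simp [Fintype.card_perm, Nat.factorial_succ]⟩)

lemma pairEquiv_apply (n : ℕ) (p : Fin (n + 1)) (τ : Equiv.Perm (Fin n)) :
    pairEquiv n (p, τ) = embPerm n p τ := rfl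

lemma val_succAbove {n : ℕ} (p : Fin (n + 1)) (k : Fin n) :
    (p.succAbove k).val = shiftNat p.val k.val := by
  rw [Fin.succAbove, shiftNat]
  split_ifs with h1 h2 h2
  · rfl
  · exact absurd (by simpa [Fin.lt_def] using h1) h2
  · exact absurd (by simpa [Fin.lt_def] using h2) h1
  · rfl

lemma prod_erase_succAbove {n : ℕ} (p : Fin (n + 1)) (f : Fin (n + 1) → F) :
    ∏ a ∈ Finset.univ.erase p, f a = ∏ i : Fin n, f (p.succAbove i) := by
  have himg : (Finset.univ : Finset (Fin n)).image p.succAbove = Finset.univ.erase p := by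
    ext b
    simp only [Finset.mem_image, Finset.mem_univ, true_and, Finset.mem_erase, and_true]
    constructor
    · rintro ⟨i, rfl⟩; exact Fin.succAbove_ne p i
    · intro hb; exact Fin.exists_succAbove_eq hb
  rw [← himg, Finset.prod_image (fun a _ b _ h => Fin.succAbove_right_injective h)]

lemma HL_branch (n u : ℕ) (ν : Fin n → ℕ) :
    HL (n + 1) (Fin.cons u ν) =
      ∑ p : Fin (n + 1), x p.val ^ u *
        (∏ a ∈ Finset.univ.erase p, (x p.val - t * x a.val) / (x p.val - x a.val)) *
        zeta p.val (HL n ν) := by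
  rw [HL_eq]
  rw [← Fintype.sum_equiv (pairEquiv n)
    (fun pt => pact (n+1) (pairEquiv n pt) (HLterm (n+1) (Fin.cons u ν)))
    (fun σ => pact (n+1) σ (HLterm (n+1) (Fin.cons u ν))) (fun pt => rfl)]
  rw [Fintype.sum_prod_type]
  refine Finset.sum_congr rfl (fun p _ => ?_)
  -- compute the inner sum over τ
  have key : ∀ τ : Equiv.Perm (Fin n),
      pact (n+1) (pairEquiv n (p, τ)) (HLterm (n+1) (Fin.cons u ν)) =
      x p.val ^ u *
        (∏ a ∈ Finset.univ.erase p, (x p.val - t * x a.val) / (x p.val - x a.val)) *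
        zeta p.val (pact n τ (HLterm n ν)) := by
    intro τ
    rw [pairEquiv_apply, pact_HLterm, pact_HLterm]
    simp only [HLterm, map_mul, map_prod, map_pow, map_div₀, map_sub, zeta_x, zeta_t]
    rw [Fin.prod_univ_succ, Fin.prod_univ_succ, Fin.prod_Ioi_zero]
    simp only [embPerm_zero, embPerm_succ, Fin.cons_zero, Fin.cons_succ, Fin.prod_Ioi_succ]
    rw [prod_erase_succAbove p
      (fun a => (x p.val - t * x a.val) / (x p.val - x a.val))]
    rw [← Equiv.prod_comp τ
      (fun j => (x p.val - t * x (p.succAbove j).val) / (x p.val - x (p.succAbove j).val))]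
    simp only [val_succAbove]
    ring
  simp only [key]
  rw [← Finset.mul_sum, ← map_sum, ← HL_eq]

end Branch

section Helpers

@[simp] lemma shiftNat_zero (k : ℕ) : shiftNat 0 k = k + 1 := by simp [shiftNat]

lemma subF_congr (g g' : Fin 2 ⊕ ℕ → Fin 2 ⊕ ℕ) (hg : Function.Injective g)
    (hg' : Function.Injective g') (h : g = g') : subF g hg = subF g' hg' := by
  subst h; rfl

lemma zeta_comp3 (pv rv : ℕ) (y : F) :
    zeta 0 (zeta pv (zeta rv y)) =
      zetaP (pv + 1) (shiftNat pv rv + 1) (zeta 0 y) := by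
  set i := pv + 1
  set j := shiftNat pv rv + 1
  have h1 : ((zeta 0).comp ((zeta pv).comp (zeta rv))) =
      subF (Sum.map id (shiftNat 0 ∘ shiftNat pv ∘ shiftNat rv))
        (Function.injective_id.sumMap (((shiftNat_inj 0).comp (shiftNat_inj pv)).comp
          (shiftNat_inj rv))) := by
    rw [zeta, zeta, zeta, subF_comp, subF_comp]
    exact subF_congr _ _ _ _ (by funext k; cases k <;> rfl)
  have h2 : ((zetaP i j).comp (zeta 0)) =
      subF (Sum.map id (shiftNat (max i j) ∘ shiftNat (min i j) ∘ shiftNat 0))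
        (Function.injective_id.sumMap (((shiftNat_inj _).comp (shiftNat_inj _)).comp
          (shiftNat_inj 0))) := by
    rw [zetaP, zeta, zeta, zeta, subF_comp, subF_comp]
    exact subF_congr _ _ _ _ (by funext k; cases k <;> rfl)
  have h3 : (shiftNat 0 ∘ shiftNat pv ∘ shiftNat rv) =
      (shiftNat (max i j) ∘ shiftNat (min i j) ∘ shiftNat 0) := by
    funext k
    simp only [Function.comp_apply, shiftNat, i, j]
    split_ifs <;> omega
  have := congrArg (fun φ : F →+* F => φ y)
    (h1.trans ((subF_congr _ _ _ _ (by rw [h3])).trans h2.symm))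
  simpa using this

lemma zetaP_x (i j k : ℕ) :
    zetaP i j (x k) = x (shiftNat (max i j) (shiftNat (min i j) k)) := by
  rw [zetaP, RingHom.comp_apply, zeta_x, zeta_x]

lemma zetaP_x0 (i j : ℕ) (hi : 1 ≤ i) (hj : 1 ≤ j) : zetaP i j (x 0) = x 0 := by
  rw [zetaP_x]
  have h1 : shiftNat (min i j) 0 = 0 := by
    simp only [shiftNat]; rw [if_pos (by omega : 0 < min i j)]
  rw [h1]
  simp only [shiftNat]; rw [if_pos (by omega : 0 < max i j)]

lemma zetaP_q (i j : ℕ) : zetaP i j q = q := by rw [zetaP, RingHom.comp_apply, zeta_q, zeta_q]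

lemma zetaP_t (i j : ℕ) : zetaP i j t = t := by rw [zetaP, RingHom.comp_apply, zeta_t, zeta_t]

lemma hom_GLw (φ : F →+* F) (hq : φ q = q) (ht : φ t = t) (a b : ℕ) :
    φ (GLw a b) = GLw a b := by
  rw [GLw]; split_ifs <;> simp [hq, ht]

lemma hom_GRw (φ : F →+* F) (hq : φ q = q) (ht : φ t = t) (a b : ℕ) :
    φ (GRw a b) = GRw a b := by
  rw [GRw]; split_ifs <;> simp [hq, ht]

lemma hom_wgt (φ : F →+* F) (hq : φ q = q) (ht : φ t = t) (a1 a2 mm : ℕ) :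
    φ (wgt a1 a2 mm) = wgt a1 a2 mm := by
  rw [wgt, map_add, map_add, hom_GLw φ hq ht, hom_GRw φ hq ht]
  congr 1
  split_ifs <;> simp [hq, ht]

lemma hom_Mdet (φ : F →+* F) (hq : φ q = q) (ht : φ t = t) (n : ℕ)
    (α : Fin (n + 1) → ℕ) (μ : Fin n → ℕ) : φ (Mdet n α μ) = Mdet n α μ := by
  rw [Mdet, RingHom.map_det]
  congr 1
  ext i j
  simp only [RingHom.mapMatrix_apply, Matrix.map_apply, Matrix.of_apply, apply_ite φ, map_one, map_zero, map_mul,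
    hom_wgt φ hq ht, hom_GRw φ hq ht, hom_GLw φ hq ht]

end Helpers

section Prods

lemma zeta0_HL_branch2 (n u v : ℕ) (ν : Fin n → ℕ) :
    zeta 0 (HL (n + 2) (Fin.cons u (Fin.cons v ν))) =
      ∑ p : Fin (n + 2), ∑ r : Fin (n + 1),
        x (p.val + 1) ^ u * x (shiftNat p.val r.val + 1) ^ v *
        ((∏ a ∈ Finset.univ.erase p,
          (x (p.val + 1) - t * x (a.val + 1)) / (x (p.val + 1) - x (a.val + 1))) *
        ((∏ a ∈ Finset.univ.erase r,
          (x (shiftNat p.val r.val + 1) - t * x (shiftNat p.val a.val + 1)) /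
            (x (shiftNat p.val r.val + 1) - x (shiftNat p.val a.val + 1))) *
        zeta 0 (zeta p.val (zeta r.val (HL n ν))))) := by
  rw [HL_branch (n + 1) u (Fin.cons v ν)]
  rw [map_sum]
  refine Finset.sum_congr rfl fun p _ => ?_
  rw [HL_branch n v ν]
  simp only [map_sum, map_mul, map_pow, map_prod, map_div₀, map_sub, zeta_x, zeta_t,
    shiftNat_zero, Finset.mul_sum]
  refine Finset.sum_congr rfl fun r _ => ?_
  ring

lemma prodA (k : ℕ) (p : Fin k) (f : ℕ → F) :
    ∏ a ∈ Finset.univ.erase p, f (a.val + 1) = ∏ a ∈ (Finset.Icc 1 k).erase (p.val + 1), f a := by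
  refine Finset.prod_bij (fun a _ => a.val + 1) ?_ ?_ ?_ (fun a _ => rfl)
  · intro a ha
    rw [Finset.mem_erase] at ha
    have h1 := a.isLt
    have h2 : a.val ≠ p.val := fun h => ha.1 (Fin.ext h)
    rw [Finset.mem_erase, Finset.mem_Icc]
    omega
  · intro a _ b _ h
    exact Fin.ext (by omega)
  · intro b hb
    rw [Finset.mem_erase, Finset.mem_Icc] at hb
    have hp := p.isLt
    refine ⟨⟨b - 1, by omega⟩, Finset.mem_erase.2 ⟨?_, Finset.mem_univ _⟩, by dsimp only; omega⟩
    intro h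
    have := congrArg Fin.val h
    simp at this
    omega

lemma prodB (k : ℕ) (p : Fin (k + 1)) (r : Fin k) (f : ℕ → F) :
    ∏ a ∈ Finset.univ.erase r, f (shiftNat p.val a.val + 1) =
      ∏ a ∈ ((Finset.Icc 1 (k + 1)).erase (p.val + 1)).erase (shiftNat p.val r.val + 1), f a := by
  have hp := p.isLt
  have hr := r.isLt
  refine Finset.prod_bij (fun a _ => shiftNat p.val a.val + 1) ?_ ?_ ?_ (fun a _ => rfl)
  · intro a ha
    rw [Finset.mem_erase] at ha
    have h1 := a.isLt
    have h2 : a.val ≠ r.val := fun h => ha.1 (Fin.ext h)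
    rw [Finset.mem_erase, Finset.mem_erase, Finset.mem_Icc]
    simp only [shiftNat]
    split_ifs <;> omega
  · intro a _ b _ h
    refine Fin.ext ?_
    simp only [shiftNat] at h
    split_ifs at h <;> omega
  · intro b hb
    rw [Finset.mem_erase, Finset.mem_erase, Finset.mem_Icc] at hb
    obtain ⟨hb1, hb2, hb3, hb4⟩ := hb
    simp only [shiftNat] at hb1
    refine ⟨⟨if b - 1 < p.val then b - 1 else b - 2, by split_ifs <;> omega⟩,
      Finset.mem_erase.2 ⟨?_, Finset.mem_univ _⟩, ?_⟩
    · intro h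
      have hval : (if b - 1 < p.val then b - 1 else b - 2) = (r : ℕ) := congrArg Fin.val h
      apply hb1
      split_ifs at hval ⊢ <;> omega
    · dsimp only
      simp only [shiftNat]
      split_ifs <;> omega

lemma prodC (m i j : ℕ) (hi1 : 1 ≤ i) (hi2 : i ≤ m + 2) (hj1 : 1 ≤ j) (hj2 : j ≤ m + 2)
    (hij : i ≠ j) (f : ℕ → F) :
    ∏ a ∈ Finset.Icc 1 m, f (shiftNat (max i j) (shiftNat (min i j) a)) =
      ∏ a ∈ ((Finset.Icc 1 (m + 2)).erase i).erase j, f a := by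
  refine Finset.prod_bij (fun a _ => shiftNat (max i j) (shiftNat (min i j) a)) ?_ ?_ ?_
    (fun a _ => rfl)
  · intro a ha
    rw [Finset.mem_Icc] at ha
    rw [Finset.mem_erase, Finset.mem_erase, Finset.mem_Icc]
    simp only [shiftNat]
    split_ifs <;> omega
  · intro a _ b _ h
    simp only [shiftNat] at h
    split_ifs at h <;> omega
  · intro b hb
    rw [Finset.mem_erase, Finset.mem_erase, Finset.mem_Icc] at hb
    obtain ⟨hb1, hb2, hb3, hb4⟩ := hb
    refine ⟨if b < min i j then b else if b < max i j then b - 1 else b - 2,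
      Finset.mem_Icc.2 (by split_ifs <;> omega), ?_⟩
    simp only [shiftNat]
    split_ifs <;> omega

end Prods

section Final

lemma innerSumGT (m : ℕ) (α : Fin (m + 1) → ℕ) (lam2 : Fin (m + 1) → ℕ)
    (IH : HL (m + 1) lam2 * ∏ a ∈ Finset.Icc 1 m, (x 0 - q * x a) =
      ∑ μ ∈ GT2 m α, Mdet m α μ * x 0 ^ (tot α - tot μ) *
        zeta 0 (HL m (fun i => μ i - rho m i)))
    (i j : ℕ) (hi : 1 ≤ i) (hj : 1 ≤ j) :
    ∑ μ ∈ GT2 m α, Mdet m α μ * x 0 ^ (tot α - tot μ) *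
        zetaP i j (zeta 0 (HL m (fun i => μ i - rho m i))) =
      zetaP i j (HL (m + 1) lam2) *
        ∏ a ∈ Finset.Icc 1 m, (x 0 - q * x (shiftNat (max i j) (shiftNat (min i j) a))) := by
  have h := congrArg (zetaP i j) IH
  rw [map_mul, map_sum] at h
  simp only [map_mul, map_pow, hom_Mdet (zetaP i j) (zetaP_q i j) (zetaP_t i j),
    zetaP_x0 i j hi hj] at h
  rw [← h]
  congr 1
  rw [map_prod]
  exact Finset.prod_congr rfl fun a _ => by
    rw [map_sub, map_mul, zetaP_x0 i j hi hj, zetaP_q, zetaP_x]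

lemma sum_fin_icc (k : ℕ) (T : ℕ → ℕ → F) :
    ∑ p : Fin (k + 2), ∑ r : Fin (k + 1), T (p.val + 1) (shiftNat p.val r.val + 1) =
      ∑ i ∈ Finset.Icc 1 (k + 2), ∑ j ∈ (Finset.Icc 1 (k + 2)).erase i, T i j := by
  refine Finset.sum_bij (fun p _ => p.val + 1) ?_ ?_ ?_ ?_
  · intro p _; rw [Finset.mem_Icc]; have := p.isLt; omega
  · intro a _ b _ h; exact Fin.ext (by omega)
  · intro b hb
    rw [Finset.mem_Icc] at hb
    exact ⟨⟨b - 1, by omega⟩, Finset.mem_univ _, by dsimp only; omega⟩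
  · intro p _
    have hp := p.isLt
    refine Finset.sum_bij (fun r _ => shiftNat p.val r.val + 1) ?_ ?_ ?_ (fun r _ => rfl)
    · intro r _
      have := r.isLt
      rw [Finset.mem_erase, Finset.mem_Icc]
      simp only [shiftNat]; split_ifs <;> omega
    · intro a _ b _ h
      refine Fin.ext ?_
      simp only [shiftNat] at h; split_ifs at h <;> omega
    · intro b hb
      rw [Finset.mem_erase, Finset.mem_Icc] at hb
      obtain ⟨hb1, hb2, hb3⟩ := hb
      refine ⟨⟨if b - 1 < p.val then b - 1 else b - 2, by split_ifs <;> omega⟩,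
        Finset.mem_univ _, ?_⟩
      simp only [shiftNat]; split_ifs <;> omega
end Final

/-- **Lemma 4, equation (GT2).** With `λ'' = (λ_3,…,λ_n)`, `α'' = (α_3,…,α_n)`
(where `α = λ + ρ_n`), assuming the inductive hypothesis, one has
`F_{λ''}(u,v) = Σ_{2≤i≠j≤n} x_i^u x_j^v ∏_{2≤a≤n,a≠i}(x_i-t x_a)/(x_i-x_a)
  ∏_{2≤a≤n,a≠i,j}(x_j-t x_a)/(x_j-x_a) ζ_{i,j}(P_{λ''}) ∏_{2≤a≤n,a≠i,j}(x_1-q x_a)`. -/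
theorem lemma_GT2 (m : ℕ) (lam : Fin (m + 3) → ℕ)
    (hlam : ∀ i j : Fin (m + 3), i ≤ j → lam j ≤ lam i) (u v : ℕ)
    (IH : HL (m + 1) (fun j => lam j.succ.succ) * ∏ a ∈ Finset.Icc 1 m, (x 0 - q * x a) =
      ∑ μ ∈ GT2 m (fun i => lam i.succ.succ + rho (m + 3) i.succ.succ),
        Mdet m (fun i => lam i.succ.succ + rho (m + 3) i.succ.succ) μ *
          x 0 ^ (tot (fun i : Fin (m + 1) => lam i.succ.succ + rho (m + 3) i.succ.succ) - tot μ) *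
          zeta 0 (HL m (fun i => μ i - rho m i))) :
    ∑ μ ∈ GT2 m (fun i => lam i.succ.succ + rho (m + 3) i.succ.succ),
        Mdet m (fun i => lam i.succ.succ + rho (m + 3) i.succ.succ) μ *
          x 0 ^ (tot (fun i : Fin (m + 1) => lam i.succ.succ + rho (m + 3) i.succ.succ) - tot μ) *
          zeta 0 (HL (m + 2) (Fin.cons u (Fin.cons v (fun i => μ i - rho m i)))) =
      ∑ i ∈ Finset.Icc 1 (m + 2), ∑ j ∈ (Finset.Icc 1 (m + 2)).erase i,
        x i ^ u * x j ^ v *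
        (∏ a ∈ (Finset.Icc 1 (m + 2)).erase i, (x i - t * x a) / (x i - x a)) *
        (∏ a ∈ ((Finset.Icc 1 (m + 2)).erase i).erase j, (x j - t * x a) / (x j - x a)) *
        zetaP i j (HL (m + 1) (fun l => lam l.succ.succ)) *
        ∏ a ∈ ((Finset.Icc 1 (m + 2)).erase i).erase j, (x 0 - q * x a) := by
  classical
  set α : Fin (m + 1) → ℕ := fun i => lam i.succ.succ + rho (m + 3) i.succ.succ with hα
  set C : (Fin m → ℕ) → F := fun μ => Mdet m α μ * x 0 ^ (tot α - tot μ) with hC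
  -- Step 1: expand via the double branching rule
  rw [Finset.sum_congr rfl (fun μ _ => by
    rw [zeta0_HL_branch2 m u v (fun i => μ i - rho m i)] :
    ∀ μ ∈ GT2 m α, C μ * zeta 0 (HL (m + 2) (Fin.cons u (Fin.cons v (fun i => μ i - rho m i)))) =
      C μ * ∑ p : Fin (m + 2), ∑ r : Fin (m + 1),
        x (p.val + 1) ^ u * x (shiftNat p.val r.val + 1) ^ v *
        ((∏ a ∈ Finset.univ.erase p,
          (x (p.val + 1) - t * x (a.val + 1)) / (x (p.val + 1) - x (a.val + 1))) *
        ((∏ a ∈ Finset.univ.erase r,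
          (x (shiftNat p.val r.val + 1) - t * x (shiftNat p.val a.val + 1)) /
            (x (shiftNat p.val r.val + 1) - x (shiftNat p.val a.val + 1))) *
        zeta 0 (zeta p.val (zeta r.val (HL m (fun i => μ i - rho m i)))))))]
  -- Step 2: distribute and swap the sums
  simp only [Finset.mul_sum]
  rw [Finset.sum_comm]
  rw [Finset.sum_congr rfl (fun p _ => Finset.sum_comm)]
  -- Step 3: convert the RHS to Fin-indexed sums
  rw [← sum_fin_icc m (fun i j =>
    x i ^ u * x j ^ v *
    (∏ a ∈ (Finset.Icc 1 (m + 2)).erase i, (x i - t * x a) / (x i - x a)) *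
    (∏ a ∈ ((Finset.Icc 1 (m + 2)).erase i).erase j, (x j - t * x a) / (x j - x a)) *
    zetaP i j (HL (m + 1) (fun l => lam l.succ.succ)) *
    ∏ a ∈ ((Finset.Icc 1 (m + 2)).erase i).erase j, (x 0 - q * x a))]
  refine Finset.sum_congr rfl fun p _ => ?_
  refine Finset.sum_congr rfl fun r _ => ?_
  have hp := p.isLt
  have hr := r.isLt
  set i : ℕ := p.val + 1 with hi
  set j : ℕ := shiftNat p.val r.val + 1 with hj
  have hij : i ≠ j := by
    rw [hi, hj]; simp only [shiftNat]; split_ifs <;> omega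
  have hj2 : j ≤ m + 2 := by
    rw [hj]; simp only [shiftNat]; split_ifs <;> omega
  -- Step 4: pull out the μ-independent factors and apply the inductive hypothesis
  rw [Finset.sum_congr rfl (fun μ _ => by
    rw [zeta_comp3 p.val r.val (HL m (fun i => μ i - rho m i))]
    ring :
    ∀ μ ∈ GT2 m α, C μ *
      (x i ^ u * x j ^ v *
        ((∏ a ∈ Finset.univ.erase p,
          (x i - t * x (a.val + 1)) / (x i - x (a.val + 1))) *
        ((∏ a ∈ Finset.univ.erase r,
          (x j - t * x (shiftNat p.val a.val + 1)) / (x j - x (shiftNat p.val a.val + 1))) *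
        zeta 0 (zeta p.val (zeta r.val (HL m (fun i => μ i - rho m i))))))) =
      (x i ^ u * x j ^ v *
        (∏ a ∈ Finset.univ.erase p,
          (x i - t * x (a.val + 1)) / (x i - x (a.val + 1))) *
        (∏ a ∈ Finset.univ.erase r,
          (x j - t * x (shiftNat p.val a.val + 1)) / (x j - x (shiftNat p.val a.val + 1)))) *
      (C μ * zetaP i j (zeta 0 (HL m (fun i => μ i - rho m i)))))]
  rw [← Finset.mul_sum]
  rw [innerSumGT m α (fun j => lam j.succ.succ) IH i j (by omega) (by omega)]
  -- Step 5: reindex the products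
  rw [prodA (m + 2) p (fun a => (x i - t * x a) / (x i - x a))]
  rw [prodB (m + 1) p r (fun a => (x j - t * x a) / (x j - x a))]
  rw [prodC m i j (by omega) (by omega) (by omega) hj2 hij (fun a => x 0 - q * x a)]
  ring


end
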